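/- For every integer n ≥ 1, the number of cyclic permutations of length n avoiding both cyclic patterns [1234] and [1423] equals 1 + C(n−1, 2), where C(n−1,2) is the binomial coefficient; that is, #Av_n([1234],[1423]) = 1 + binom(n−1, 2). -/

import Mathlib

/-- A sequence `σ` of length `n` (with distinct values) contains the pattern `π`
of length `k` if some subsequence of `σ` is order isomorphic to `π`. -/
def ContainsPat {n k : ℕ} (σ : Fin n → Fin n) (π : Fin k → ℕ) : Prop :=
  ∃ f : Fin k → Fin n, StrictMono f ∧ ∀ i j : Fin k, π i < π j ↔ σ (f i) < σ (f j)

/-- The rotation of the sequence `σ` starting at position `r`. -/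
def rotSeq {n : ℕ} (σ : Fin n → Fin n) (r : Fin n) : Fin n → Fin n :=
  fun i => σ (i + r)

/-- The cyclic permutation `[σ]` contains the cyclic pattern `[π]` if some
rotation of `σ` contains `π` linearly. -/
def CycContains {n k : ℕ} (σ : Fin n → Fin n) (π : Fin k → ℕ) : Prop :=
  ∃ r : Fin n, ContainsPat (rotSeq σ r) π

/-- The cyclic permutation `[σ]` avoids the cyclic pattern `[π]`. -/
def CycAvoids {n k : ℕ} (σ : Fin n → Fin n) (π : Fin k → ℕ) : Prop :=
  ¬ CycContains σ π

/-- The cyclic permutation `[σ]`, i.e. the set of all rotations of `σ`. -/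
def CycClass {n : ℕ} (σ : Fin n → Fin n) : Set (Fin n → Fin n) :=
  Set.range (rotSeq σ)

/-- The set of cyclic permutations (rotation classes) of length `n` all of whose
representatives are permutations and which satisfy the (rotation-invariant)
predicate `P`. -/
def AvClasses (n : ℕ) (P : (Fin n → Fin n) → Prop) : Set (Set (Fin n → Fin n)) :=
  { C | ∃ σ : Equiv.Perm (Fin n), C = CycClass ⇑σ ∧ P ⇑σ }

/-- The cyclic descent number: the number of indices `i` (mod `n`) with
`σ i > σ (i+1)`. -/
def cdes {n : ℕ} (σ : Fin n → Fin n) : ℕ :=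
  (Finset.univ.filter fun i : Fin n =>
    σ ⟨(↑i + 1) % n, Nat.mod_lt _ i.pos⟩ < σ i).card

/-- The cyclic peak number: the number of indices `i` (mod `n`) with
`σ (i-1) < σ i > σ (i+1)`. -/
def cpk {n : ℕ} (σ : Fin n → Fin n) : ℕ :=
  (Finset.univ.filter fun i : Fin n =>
    σ ⟨(↑i + (n - 1)) % n, Nat.mod_lt _ i.pos⟩ < σ i ∧
    σ ⟨(↑i + 1) % n, Nat.mod_lt _ i.pos⟩ < σ i).card

section AuxCyc
variable {n : ℕ}

lemma mod_low {x : ℕ} (h : x < n) : x % n = x := Nat.mod_eq_of_lt h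

lemma mod_high {x : ℕ} (h1 : n ≤ x) (h2 : x < 2 * n) : x % n = x - n := by
  rw [Nat.mod_eq_sub_mod h1, Nat.mod_eq_of_lt (by omega)]

lemma rotSeq_rotSeq [NeZero n] (σ : Fin n → Fin n) (r u : Fin n) :
    rotSeq (rotSeq σ r) u = rotSeq σ (u + r) := by
  funext i; simp [rotSeq, add_assoc]

lemma rotSeq_zero [NeZero n] (σ : Fin n → Fin n) : rotSeq σ 0 = σ := by
  funext i; simp [rotSeq]

lemma cycContains_rotSeq {k : ℕ} [NeZero n] (σ : Fin n → Fin n) (r : Fin n) (π : Fin k → ℕ) :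
    CycContains (rotSeq σ r) π ↔ CycContains σ π := by
  constructor
  · rintro ⟨u, h⟩; exact ⟨u + r, by rwa [rotSeq_rotSeq] at h⟩
  · rintro ⟨u, h⟩
    exact ⟨u - r, by rw [rotSeq_rotSeq, sub_add_cancel]; exact h⟩

/-- the bad configuration: an occurrence of 123 or 312 strictly after position 0 -/
def Bad {n : ℕ} (s : Fin n → Fin n) : Prop :=
  ∃ i j k : Fin n, 0 < (i:ℕ) ∧ (i:ℕ) < (j:ℕ) ∧ (j:ℕ) < (k:ℕ) ∧
    (((s i : ℕ) < (s j : ℕ) ∧ (s j : ℕ) < (s k : ℕ)) ∨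
     ((s j : ℕ) < (s k : ℕ) ∧ (s k : ℕ) < (s i : ℕ)))

lemma rot4_order [NeZero n] {f : Fin 4 → Fin n} (hf : StrictMono f) (r : Fin n)
    (t : Fin 4 → Fin n) (ht : ∀ m, t m = f m + r) :
    ((t 0:ℕ) < (t 1:ℕ) ∧ (t 1:ℕ) < (t 2:ℕ) ∧ (t 2:ℕ) < (t 3:ℕ)) ∨
    ((t 1:ℕ) < (t 2:ℕ) ∧ (t 2:ℕ) < (t 3:ℕ) ∧ (t 3:ℕ) < (t 0:ℕ)) ∨
    ((t 2:ℕ) < (t 3:ℕ) ∧ (t 3:ℕ) < (t 0:ℕ) ∧ (t 0:ℕ) < (t 1:ℕ)) ∨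
    ((t 3:ℕ) < (t 0:ℕ) ∧ (t 0:ℕ) < (t 1:ℕ) ∧ (t 1:ℕ) < (t 2:ℕ)) := by
  have h01 : (f 0:ℕ) < (f 1:ℕ) := hf (by decide : (0:Fin 4) < 1)
  have h12 : (f 1:ℕ) < (f 2:ℕ) := hf (by decide : (1:Fin 4) < 2)
  have h23 : (f 2:ℕ) < (f 3:ℕ) := hf (by decide : (2:Fin 4) < 3)
  have hr : (r:ℕ) < n := r.isLt
  have hf3 : (f 3:ℕ) < n := (f 3).isLt
  have hv : ∀ m, (t m : ℕ) = ((f m:ℕ) + (r:ℕ)) % n := by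
    intro m; rw [ht m]; exact Fin.val_add _ _
  by_cases c0 : (f 0:ℕ) + r < n
  · by_cases c1 : (f 1:ℕ) + r < n
    · by_cases c2 : (f 2:ℕ) + r < n
      · by_cases c3 : (f 3:ℕ) + r < n
        · left
          rw [hv 0, hv 1, hv 2, hv 3, mod_low c0, mod_low c1, mod_low c2, mod_low c3]
          omega
        · right; right; right
          rw [hv 0, hv 1, hv 2, hv 3, mod_low c0, mod_low c1, mod_low c2,
            mod_high (by omega) (by omega)]
          omega
      · right; right; left
        rw [hv 0, hv 1, hv 2, hv 3, mod_low c0, mod_low c1,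
          mod_high (by omega) (by omega), mod_high (by omega) (by omega)]
        omega
    · right; left
      rw [hv 0, hv 1, hv 2, hv 3, mod_low c0, mod_high (by omega) (by omega),
        mod_high (by omega) (by omega), mod_high (by omega) (by omega)]
      omega
  · left
    rw [hv 0, hv 1, hv 2, hv 3, mod_high (by omega) (by omega), mod_high (by omega) (by omega),
      mod_high (by omega) (by omega), mod_high (by omega) (by omega)]
    omega


lemma mono4 {α : Type*} [Preorder α] (q : Fin 4 → α) (h01 : q 0 < q 1) (h12 : q 1 < q 2)
    (h23 : q 2 < q 3) : StrictMono q := by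
  intro a b hab
  fin_cases a <;> fin_cases b <;>
    first
      | exact absurd hab (by decide)
      | exact h01
      | exact h12
      | exact h23
      | exact h01.trans h12
      | exact h12.trans h23
      | exact (h01.trans h12).trans h23

lemma iff1234 (W : Fin 4 → ℕ) (h01 : W 0 < W 1) (h12 : W 1 < W 2) (h23 : W 2 < W 3) :
    ∀ i j : Fin 4, ![1,2,3,4] i < ![1,2,3,4] j ↔ W i < W j := by
  intro i j
  fin_cases i <;> fin_cases j <;> simp <;> omega

lemma iff1423 (W : Fin 4 → ℕ) (h02 : W 0 < W 2) (h23 : W 2 < W 3) (h31 : W 3 < W 1) :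
    ∀ i j : Fin 4, ![1,4,2,3] i < ![1,4,2,3] j ↔ W i < W j := by
  intro i j
  fin_cases i <;> fin_cases j <;> simp <;> omega

lemma key_iff [NeZero n] (s : Fin n → Fin n) (hs : Function.Injective s) (h0 : s 0 = 0) :
    (CycContains s ![1,2,3,4] ∨ CycContains s ![1,4,2,3]) ↔ Bad s := by
  have hv0 : (s 0 : ℕ) = 0 := by rw [h0]; rfl
  have hpos : ∀ x : Fin n, 0 < (s x:ℕ) → 0 < (x:ℕ) := by
    intro x hx
    rcases Nat.eq_zero_or_pos (x:ℕ) with h | h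
    · exfalso; have : x = 0 := Fin.ext (by simpa using h)
      rw [this] at hx; omega
    · exact h
  constructor
  · rintro (⟨r, f, hf, hiff⟩ | ⟨r, f, hf, hiff⟩)
    · -- pattern 1234 : v0 < v1 < v2 < v3
      set t : Fin 4 → Fin n := fun m => f m + r with htdef
      have hval : ∀ i j : Fin 4, (![1,2,3,4] i < ![1,2,3,4] j) ↔ (s (t i) : ℕ) < (s (t j):ℕ) := by
        intro i j
        rw [hiff i j, Fin.lt_def]; rfl
      have h01 : (s (t 0):ℕ) < (s (t 1):ℕ) := (hval 0 1).mp (by decide)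
      have h12 : (s (t 1):ℕ) < (s (t 2):ℕ) := (hval 1 2).mp (by decide)
      have h23 : (s (t 2):ℕ) < (s (t 3):ℕ) := (hval 2 3).mp (by decide)
      have ht : ∀ m, t m = f m + r := fun m => rfl
      have ht1 : 0 < (t 1 : ℕ) := hpos _ (by omega)
      have ht3 : 0 < (t 3 : ℕ) := hpos _ (by omega)
      rcases rot4_order hf r t ht with ⟨o1,o2,o3⟩ | ⟨o1,o2,o3⟩ | ⟨o1,o2,o3⟩ | ⟨o1,o2,o3⟩
      · exact ⟨t 1, t 2, t 3, ht1, o2, o3, Or.inl ⟨h12, h23⟩⟩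
      · exact ⟨t 1, t 2, t 3, ht1, o1, o2, Or.inl ⟨h12, h23⟩⟩
      · exact ⟨t 3, t 0, t 1, ht3, o2, o3, Or.inr ⟨h01, by omega⟩⟩
      · exact ⟨t 3, t 0, t 1, ht3, o1, o2, Or.inr ⟨h01, by omega⟩⟩
    · -- pattern 1423 : v0 < v2 < v3 < v1
      set t : Fin 4 → Fin n := fun m => f m + r with htdef
      have hval : ∀ i j : Fin 4, (![1,4,2,3] i < ![1,4,2,3] j) ↔ (s (t i) : ℕ) < (s (t j):ℕ) := by
        intro i j
        rw [hiff i j, Fin.lt_def]; rfl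
      have h02 : (s (t 0):ℕ) < (s (t 2):ℕ) := (hval 0 2).mp (by decide)
      have h23 : (s (t 2):ℕ) < (s (t 3):ℕ) := (hval 2 3).mp (by decide)
      have h31 : (s (t 3):ℕ) < (s (t 1):ℕ) := (hval 3 1).mp (by decide)
      have ht : ∀ m, t m = f m + r := fun m => rfl
      have ht1 : 0 < (t 1 : ℕ) := hpos _ (by omega)
      have ht2 : 0 < (t 2 : ℕ) := hpos _ (by omega)
      have ht3 : 0 < (t 3 : ℕ) := hpos _ (by omega)
      rcases rot4_order hf r t ht with ⟨o1,o2,o3⟩ | ⟨o1,o2,o3⟩ | ⟨o1,o2,o3⟩ | ⟨o1,o2,o3⟩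
      · exact ⟨t 1, t 2, t 3, ht1, o2, o3, Or.inr ⟨h23, h31⟩⟩
      · exact ⟨t 1, t 2, t 3, ht1, o1, o2, Or.inr ⟨h23, h31⟩⟩
      · exact ⟨t 2, t 3, t 1, ht2, o1, by omega, Or.inl ⟨h23, h31⟩⟩
      · exact ⟨t 3, t 0, t 2, ht3, o1, by omega, Or.inr ⟨h02, h23⟩⟩
  · rintro ⟨i, j, k, hi, hij, hjk, hpat⟩
    have hne : ∀ x : Fin n, 0 < (x:ℕ) → 0 < (s x:ℕ) := by
      intro x hx
      rcases Nat.eq_zero_or_pos (s x : ℕ) with h | h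
      · exfalso
        have : s x = s 0 := Fin.ext (by simp [h, hv0])
        have := hs this
        rw [this] at hx; simp at hx
      · exact h
    have hsi : 0 < (s i : ℕ) := hne i hi
    have hsj : 0 < (s j : ℕ) := hne j (by omega)
    set q : Fin 4 → Fin n := ![(0:Fin n), i, j, k] with hq
    have hq0 : q 0 = 0 := rfl
    have hq1 : q 1 = i := rfl
    have hq2 : q 2 = j := rfl
    have hq3 : q 3 = k := rfl
    have hmono : StrictMono q := by
      refine mono4 q ?_ ?_ ?_ <;> rw [Fin.lt_def] <;>
        simp only [hq0, hq1, hq2, hq3, Fin.val_zero] <;> omega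
    set W : Fin 4 → ℕ := fun m => (s (q m) : ℕ) with hW
    have hW0 : W 0 = 0 := by simp only [hW, hq0, hv0]
    have hfin : ∀ x y : Fin 4, (W x < W y) ↔ s (q x) < s (q y) := by
      intro x y; rw [Fin.lt_def]
    rcases hpat with ⟨h1, h2⟩ | ⟨h1, h2⟩
    · refine Or.inl ⟨0, q, hmono, ?_⟩
      have hiff := iff1234 W (by simp only [hW, hq0, hq1, hv0]; omega)
        (by simp only [hW, hq1, hq2]; omega) (by simp only [hW, hq2, hq3]; omega)
      intro x y
      rw [rotSeq_zero, ← hfin x y]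
      exact hiff x y
    · refine Or.inr ⟨0, q, hmono, ?_⟩
      have hiff := iff1423 W (by simp only [hW, hq0, hq2, hv0]; omega)
        (by simp only [hW, hq2, hq3]; omega) (by simp only [hW, hq1, hq3]; omega)
      intro x y
      rw [rotSeq_zero, ← hfin x y]
      exact hiff x y

end AuxCyc
section GFun

/-- The canonical avoider with parameters `a b`: word `0, a, a-1, …, b+1, n-1, …, a+1, b, …, 1`. -/
def gfun (n a b : ℕ) (hn : 0 < n) : Fin n → Fin n := fun p =>
  if (p:ℕ) = 0 then ⟨0, hn⟩
  else if (p:ℕ) ≤ a - b then ⟨(a + 1 - (p:ℕ)) % n, Nat.mod_lt _ hn⟩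
  else if (p:ℕ) ≤ n - 1 - b then ⟨(n + a - b - (p:ℕ)) % n, Nat.mod_lt _ hn⟩
  else ⟨(n - (p:ℕ)) % n, Nat.mod_lt _ hn⟩

lemma gfun_val {n a b : ℕ} (hn : 0 < n) (p : Fin n) :
    (gfun n a b hn p : ℕ) =
      if (p:ℕ) = 0 then 0
      else if (p:ℕ) ≤ a - b then (a + 1 - (p:ℕ)) % n
      else if (p:ℕ) ≤ n - 1 - b then (n + a - b - (p:ℕ)) % n
      else (n - (p:ℕ)) % n := by
  unfold gfun
  split_ifs <;> rfl

lemma gfun_class {n a b : ℕ} (hn : 0 < n) (hba : b ≤ a) (han : a ≤ n - 1) (p : Fin n) :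
    ((p:ℕ) = 0 ∧ (gfun n a b hn p : ℕ) = 0) ∨
    (1 ≤ (p:ℕ) ∧ (p:ℕ) ≤ a - b ∧ (gfun n a b hn p : ℕ) + (p:ℕ) = a + 1) ∨
    (a - b < (p:ℕ) ∧ (p:ℕ) ≤ n - 1 - b ∧ (gfun n a b hn p : ℕ) + b + (p:ℕ) = n + a) ∨
    (n - 1 - b < (p:ℕ) ∧ (p:ℕ) ≤ n - 1 ∧ (gfun n a b hn p : ℕ) + (p:ℕ) = n) := by
  have hp : (p:ℕ) < n := p.isLt
  have hv := gfun_val (a := a) (b := b) hn p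
  by_cases h0 : (p:ℕ) = 0
  · left; rw [if_pos h0] at hv; exact ⟨h0, hv⟩
  · rw [if_neg h0] at hv
    by_cases h1 : (p:ℕ) ≤ a - b
    · right; left
      rw [if_pos h1, mod_low (by omega)] at hv
      omega
    · rw [if_neg h1] at hv
      by_cases h2 : (p:ℕ) ≤ n - 1 - b
      · right; right; left
        rw [if_pos h2, mod_low (by omega)] at hv
        omega
      · right; right; right
        rw [if_neg h2, mod_low (by omega)] at hv
        omega

lemma gfun_inj {n a b : ℕ} (hn : 0 < n) (hba : b ≤ a) (han : a ≤ n - 1) :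
    Function.Injective (gfun n a b hn) := by
  intro p q h
  have hval : (gfun n a b hn p : ℕ) = (gfun n a b hn q : ℕ) := by rw [h]
  have hc1 := gfun_class hn hba han p
  have hc2 := gfun_class hn hba han q
  apply Fin.ext
  rcases hc1 with ⟨u1, v1⟩ | ⟨u1, u1', v1⟩ | ⟨u1, u1', v1⟩ | ⟨u1, u1', v1⟩ <;>
    rcases hc2 with ⟨u2, v2⟩ | ⟨u2, u2', v2⟩ | ⟨u2, u2', v2⟩ | ⟨u2, u2', v2⟩ <;>
    omega

lemma gfun_good {n a b : ℕ} (hn : 0 < n) (hba : b ≤ a) (han : a ≤ n - 1) :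
    ¬ Bad (gfun n a b hn) := by
  rintro ⟨i, j, k, hi, hij, hjk, hpat⟩
  have hc1 := gfun_class hn hba han i
  have hc2 := gfun_class hn hba han j
  have hc3 := gfun_class hn hba han k
  rcases hpat with ⟨e1, e2⟩ | ⟨e1, e2⟩ <;>
    rcases hc1 with ⟨u1, v1⟩ | ⟨u1, u1', v1⟩ | ⟨u1, u1', v1⟩ | ⟨u1, u1', v1⟩ <;>
    rcases hc2 with ⟨u2, v2⟩ | ⟨u2, u2', v2⟩ | ⟨u2, u2', v2⟩ | ⟨u2, u2', v2⟩ <;>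
    rcases hc3 with ⟨u3, v3⟩ | ⟨u3, u3', v3⟩ | ⟨u3, u3', v3⟩ | ⟨u3, u3', v3⟩ <;>
    omega

end GFun
section StructureLem
variable {n : ℕ}

lemma structure_lem [NeZero n] (hn2 : 2 ≤ n) (σ : Equiv.Perm (Fin n))
    (h00 : σ 0 = 0) (hB : ¬ Bad ⇑σ) :
    ∃ a b : ℕ, ((b < a ∧ a ≤ n - 2) ∨ (a = n - 1 ∧ b = 0)) ∧
      ⇑σ = gfun n a b (by omega) := by
  have hn : 0 < n := by omega
  have hinj : Function.Injective ⇑σ := σ.injective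
  have hv0 : (σ 0 : ℕ) = 0 := by rw [h00]; simp
  have hvub : ∀ p : Fin n, (σ p : ℕ) ≤ n - 1 := by
    intro p; have := (σ p).isLt; omega
  have spos : ∀ p : Fin n, 0 < (p:ℕ) → 0 < (σ p:ℕ) := by
    intro p hp
    rcases Nat.eq_zero_or_pos (σ p : ℕ) with h | h
    · exfalso
      have h2 : σ p = σ 0 := Fin.ext (by simp [h, hv0])
      have h3 := congrArg Fin.val (hinj h2)
      simp at h3; omega
    · exact h
  have ppos : ∀ p : Fin n, 0 < (σ p:ℕ) → 0 < (p:ℕ) := by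
    intro p hp
    rcases Nat.eq_zero_or_pos (p : ℕ) with h | h
    · exfalso
      have h2 : p = 0 := Fin.ext (by simpa using h)
      rw [h2] at hp; omega
    · exact h
  have hsymval : ∀ w : Fin n, (σ (σ.symm w) : ℕ) = (w:ℕ) := by
    intro w; rw [Equiv.apply_symm_apply]
  -- position of the maximum value n-1
  obtain ⟨vN, hvNv⟩ : ∃ x : Fin n, (x:ℕ) = n - 1 := ⟨⟨n-1, by omega⟩, rfl⟩
  obtain ⟨pm, hpmdef⟩ : ∃ x : Fin n, x = σ.symm vN := ⟨_, rfl⟩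
  have hpmval : (σ pm : ℕ) = n - 1 := by rw [hpmdef, ← hvNv]; exact hsymval vN
  have hpm1 : 1 ≤ (pm:ℕ) := ppos pm (by omega)
  have hpmub : (pm:ℕ) < n := pm.isLt
  have huniq : ∀ p : Fin n, (σ p:ℕ) = n - 1 → p = pm := by
    intro p hp
    have h2 : σ p = vN := Fin.ext (by rw [hvNv]; exact hp)
    rw [hpmdef, ← h2, Equiv.symm_apply_apply]
  have hvne : ∀ p q : Fin n, (p:ℕ) ≠ (q:ℕ) → (σ p : ℕ) ≠ (σ q : ℕ) := by
    intro p q hpq he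
    exact hpq (congrArg Fin.val (hinj (Fin.ext he)))
  -- Claim 1 : the prefix (positions strictly between 0 and pm) is decreasing
  have Claim1 : ∀ p q : Fin n, 0 < (p:ℕ) → (p:ℕ) < (q:ℕ) → (q:ℕ) < (pm:ℕ) →
      (σ q:ℕ) < (σ p:ℕ) := by
    intro p q hp hpq hqpm
    by_contra hc
    have hne := hvne p q (by omega)
    have hnq := hvne q pm (by omega)
    exact hB ⟨p, q, pm, hp, hpq, hqpm, Or.inl ⟨by omega, by omega⟩⟩
  -- Claim 2 : the suffix (positions from pm on) is decreasing
  have Claim2 : ∀ p q : Fin n, (pm:ℕ) ≤ (p:ℕ) → (p:ℕ) < (q:ℕ) → (σ q:ℕ) < (σ p:ℕ) := by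
    intro p q hp hpq
    by_contra hc
    have hne := hvne p q (by omega)
    rcases eq_or_lt_of_le hp with h1 | h1
    · have h2 : pm = p := Fin.ext h1
      rw [← h2] at hne hc
      have := hvub q
      omega
    · have hnq := hvne q pm (by omega)
      exact hB ⟨pm, p, q, by omega, h1, hpq, Or.inr ⟨by omega, by omega⟩⟩
  -- Claim 3 : no suffix value lies strictly between two prefix values
  have Claim3 : ∀ p q u : Fin n, 0 < (p:ℕ) → (p:ℕ) < (q:ℕ) → (q:ℕ) < (pm:ℕ) →
      (pm:ℕ) < (u:ℕ) → ¬((σ q:ℕ) < (σ u:ℕ) ∧ (σ u:ℕ) < (σ p:ℕ)) := by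
    rintro p q u hp hpq hqpm hpmu ⟨hc1, hc2⟩
    exact hB ⟨p, q, u, hp, hpq, by omega, Or.inr ⟨hc1, hc2⟩⟩
  obtain ⟨one, honev⟩ : ∃ x : Fin n, (x:ℕ) = 1 := ⟨⟨1, by omega⟩, rfl⟩
  obtain ⟨a, hadef⟩ : ∃ a : ℕ, a = (σ one : ℕ) := ⟨_, rfl⟩
  have ha1 : 1 ≤ a := by rw [hadef]; exact spos one (by omega)
  have haub : a ≤ n - 1 := by rw [hadef]; exact hvub one
  -- Claim 4 : prefix values
  have Claim4 : ∀ p : Fin n, 1 ≤ (p:ℕ) → (p:ℕ) < (pm:ℕ) → (σ p:ℕ) + (p:ℕ) = a + 1 := by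
    have C4 : ∀ m : ℕ, ∀ p : Fin n, (p:ℕ) = m → 1 ≤ (p:ℕ) → (p:ℕ) < (pm:ℕ) →
        (σ p:ℕ) + (p:ℕ) = a + 1 := by
      intro m
      induction m using Nat.strong_induction_on with
      | _ m IH =>
        intro p hpm' hp1 hppm
        rcases eq_or_lt_of_le hp1 with h1 | h1
        · have h2 : one = p := Fin.ext (by omega)
          have h3 : (σ p : ℕ) = a := by rw [← h2, hadef]
          omega
        · obtain ⟨p', hp'v⟩ : ∃ x : Fin n, (x:ℕ) = (p:ℕ) - 1 :=
            ⟨⟨(p:ℕ) - 1, by have := p.isLt; omega⟩, rfl⟩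
          have hIH : (σ p':ℕ) + (p':ℕ) = a + 1 :=
            IH ((p:ℕ) - 1) (by omega) p' (by omega) (by omega) (by omega)
          have hlt : (σ p:ℕ) < (σ p':ℕ) := Claim1 p' p (by omega) (by omega) hppm
          by_contra hne
          have hw : (σ p:ℕ) < (σ p':ℕ) - 1 := by omega
          obtain ⟨w, hwv⟩ : ∃ x : Fin n, (x:ℕ) = (σ p':ℕ) - 1 :=
            ⟨⟨(σ p':ℕ) - 1, by have := (σ p').isLt; omega⟩, rfl⟩
          obtain ⟨q, hqdef⟩ : ∃ x : Fin n, x = σ.symm w := ⟨_, rfl⟩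
          have hsq : (σ q:ℕ) = (σ p':ℕ) - 1 := by rw [hqdef, hsymval w]; exact hwv
          have hq0 : 0 < (q:ℕ) := ppos q (by omega)
          have hq_ne_pm : (q:ℕ) ≠ (pm:ℕ) := by
            intro he
            have h2 : q = pm := Fin.ext he
            rw [h2] at hsq
            have := hvub p'
            omega
          rcases lt_trichotomy (q:ℕ) ((p':ℕ)) with hc | hc | hc
          · have := Claim1 q p' hq0 hc (by omega)
            omega
          · have h2 : q = p' := Fin.ext hc
            rw [h2] at hsq; omega
          · rcases lt_trichotomy (q:ℕ) ((p:ℕ)) with hd | hd | hd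
            · omega
            · have h2 : q = p := Fin.ext hd
              rw [h2] at hsq; omega
            · rcases lt_trichotomy (q:ℕ) ((pm:ℕ)) with he | he | he
              · have := Claim1 p q (by omega) hd he
                omega
              · exact hq_ne_pm he
              · exact Claim3 p' p q (by omega) (by omega) (by omega) he ⟨by omega, by omega⟩
    exact fun p h1 h2 => C4 (p:ℕ) p rfl h1 h2
  have hpma : (pm:ℕ) ≤ a + 1 := by
    rcases eq_or_lt_of_le hpm1 with h1 | h1
    · omega
    · obtain ⟨p'', hp''⟩ : ∃ x : Fin n, (x:ℕ) = (pm:ℕ) - 1 :=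
        ⟨⟨(pm:ℕ) - 1, by omega⟩, rfl⟩
      have h2 := Claim4 p'' (by omega) (by omega)
      have h3 := spos p'' (by omega)
      omega
  obtain ⟨b, hbdef⟩ : ∃ b : ℕ, b = a + 1 - (pm:ℕ) := ⟨_, rfl⟩
  have hb : b + (pm:ℕ) = a + 1 := by omega
  have hbub : b ≤ a := by omega
  -- Claim 4.5 : every value in [b+1, a] sits in the prefix
  have Claim45 : ∀ v : Fin n, b + 1 ≤ (v:ℕ) → (v:ℕ) ≤ a →
      1 ≤ (σ.symm v : ℕ) ∧ (σ.symm v : ℕ) < (pm:ℕ) := by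
    have hPF : ∀ m ∈ Finset.Ico 1 (pm:ℕ), m < n := by
      intro m hm; rw [Finset.mem_Ico] at hm; omega
    have hVI : ∀ m ∈ Finset.Icc (b+1) a, m < n := by
      intro m hm; rw [Finset.mem_Icc] at hm; omega
    have hsub : ((Finset.Ico 1 (pm:ℕ)).attachFin hPF).image ⇑σ ⊆
        (Finset.Icc (b+1) a).attachFin hVI := by
      intro x hx
      rw [Finset.mem_image] at hx
      obtain ⟨p, hp, rfl⟩ := hx
      rw [Finset.mem_attachFin, Finset.mem_Ico] at hp
      have h4 := Claim4 p hp.1 hp.2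
      rw [Finset.mem_attachFin, Finset.mem_Icc]
      omega
    have hcard1 : (((Finset.Ico 1 (pm:ℕ)).attachFin hPF).image ⇑σ).card = (pm:ℕ) - 1 := by
      rw [Finset.card_image_of_injective _ hinj, Finset.card_attachFin, Nat.card_Ico]
    have hcard2 : ((Finset.Icc (b+1) a).attachFin hVI).card = (pm:ℕ) - 1 := by
      rw [Finset.card_attachFin, Nat.card_Icc]
      omega
    have heq : ((Finset.Ico 1 (pm:ℕ)).attachFin hPF).image ⇑σ =
        (Finset.Icc (b+1) a).attachFin hVI :=
      Finset.eq_of_subset_of_card_le hsub (by omega)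
    intro v hv1 hv2
    have hvmem : v ∈ (Finset.Icc (b+1) a).attachFin hVI := by
      rw [Finset.mem_attachFin, Finset.mem_Icc]; exact ⟨hv1, hv2⟩
    rw [← heq, Finset.mem_image] at hvmem
    obtain ⟨p, hp, hsp⟩ := hvmem
    rw [Finset.mem_attachFin, Finset.mem_Ico] at hp
    have h5 : σ.symm v = p := by rw [← hsp, Equiv.symm_apply_apply]
    rw [h5]
    exact hp
  -- decrement lemma in the suffix
  have Ldec : ∀ p' p : Fin n, (pm:ℕ) ≤ (p':ℕ) → (p:ℕ) = (p':ℕ) + 1 →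
      2 ≤ (σ p':ℕ) → ((σ p':ℕ) ≤ b ∨ a + 2 ≤ (σ p':ℕ)) →
      (σ p:ℕ) = (σ p':ℕ) - 1 := by
    intro p' p h1 h2 h4 h5
    have hvlt : (σ p:ℕ) < (σ p':ℕ) := Claim2 p' p h1 (by omega)
    by_contra hne
    obtain ⟨w, hwv⟩ : ∃ x : Fin n, (x:ℕ) = (σ p':ℕ) - 1 :=
      ⟨⟨(σ p':ℕ) - 1, by have := (σ p').isLt; omega⟩, rfl⟩
    obtain ⟨q, hqdef⟩ : ∃ x : Fin n, x = σ.symm w := ⟨_, rfl⟩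
    have hsq : (σ q:ℕ) = (σ p':ℕ) - 1 := by rw [hqdef, hsymval w]; exact hwv
    have hq0 : 0 < (q:ℕ) := ppos q (by omega)
    have hq_ne_pm : (q:ℕ) ≠ (pm:ℕ) := by
      intro he
      have h6 : q = pm := Fin.ext he
      rw [h6] at hsq
      have := hvub p'
      omega
    have hqpre : ¬((q:ℕ) < (pm:ℕ)) := by
      intro hc
      have h6 := Claim4 q hq0 hc
      omega
    rcases lt_trichotomy (q:ℕ) ((p':ℕ)) with hc | hc | hc
    · have := Claim2 q p' (by omega) hc
      omega
    · have h6 : q = p' := Fin.ext hc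
      rw [h6] at hsq; omega
    · rcases lt_trichotomy (q:ℕ) ((p:ℕ)) with hd | hd | hd
      · omega
      · have h6 : q = p := Fin.ext hd
        rw [h6] at hsq; omega
      · have := Claim2 p q (by omega) hd
        omega
  -- jump lemma in the suffix
  have Ljump : ∀ p' p : Fin n, (pm:ℕ) ≤ (p':ℕ) → (p:ℕ) = (p':ℕ) + 1 →
      (σ p':ℕ) = a + 1 → b ≤ n - 2 → 1 ≤ b ∧ (σ p:ℕ) = b := by
    intro p' p h1 h2 h3 h4
    have hvlt : (σ p:ℕ) < (σ p':ℕ) := Claim2 p' p h1 (by omega)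
    have hp0 : 0 < (σ p:ℕ) := spos p (by omega)
    have hnotin : ¬(b + 1 ≤ (σ p:ℕ) ∧ (σ p:ℕ) ≤ a) := by
      rintro ⟨c1, c2⟩
      have h45 := Claim45 (σ p) c1 c2
      rw [Equiv.symm_apply_apply] at h45
      omega
    have hvb : (σ p:ℕ) ≤ b := by omega
    have hb1 : 1 ≤ b := by omega
    refine ⟨hb1, ?_⟩
    by_contra hne
    obtain ⟨w, hwv⟩ : ∃ x : Fin n, (x:ℕ) = b := ⟨⟨b, by omega⟩, rfl⟩
    obtain ⟨q, hqdef⟩ : ∃ x : Fin n, x = σ.symm w := ⟨_, rfl⟩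
    have hsq : (σ q:ℕ) = b := by rw [hqdef, hsymval w]; exact hwv
    have hq0 : 0 < (q:ℕ) := ppos q (by omega)
    have hqpre : ¬((q:ℕ) < (pm:ℕ)) := by
      intro hc
      have h6 := Claim4 q hq0 hc
      omega
    have hq_ne_pm : (q:ℕ) ≠ (pm:ℕ) := by
      intro he
      have h6 : q = pm := Fin.ext he
      rw [h6] at hsq
      omega
    rcases lt_trichotomy (q:ℕ) ((p':ℕ)) with hc | hc | hc
    · have := Claim2 q p' (by omega) hc
      omega
    · have h6 : q = p' := Fin.ext hc
      rw [h6] at hsq; omega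
    · rcases lt_trichotomy (q:ℕ) ((p:ℕ)) with hd | hd | hd
      · omega
      · have h6 : q = p := Fin.ext hd
        rw [h6] at hsq; omega
      · have := Claim2 p q (by omega) hd
        omega
  -- Claim 5 : suffix values
  have Claim5 : ∀ p : Fin n, (pm:ℕ) ≤ (p:ℕ) →
      ((p:ℕ) ≤ n - 1 - b ∧ (σ p:ℕ) + b + (p:ℕ) = n + a) ∨
      (n - 1 - b < (p:ℕ) ∧ (σ p:ℕ) + (p:ℕ) = n) := by
    have C5 : ∀ m : ℕ, ∀ p : Fin n, (p:ℕ) = m → (pm:ℕ) ≤ (p:ℕ) →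
        ((p:ℕ) ≤ n - 1 - b ∧ (σ p:ℕ) + b + (p:ℕ) = n + a) ∨
        (n - 1 - b < (p:ℕ) ∧ (σ p:ℕ) + (p:ℕ) = n) := by
      intro m
      induction m using Nat.strong_induction_on with
      | _ m IH =>
        intro p hpm' hpmp
        rcases eq_or_lt_of_le hpmp with h1 | h1
        · -- p = pm
          have hppm : (σ p : ℕ) = n - 1 := by
            have h2 : pm = p := Fin.ext h1
            rw [← h2]; exact hpmval
          by_cases hA : a ≤ n - 2
          · left; omega
          · have haN : a = n - 1 := by omega
            have hone : one = pm := huniq one (by omega)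
            have honepm : (1:ℕ) = (pm:ℕ) := by
              have := congrArg Fin.val hone; omega
            right; omega
        · -- pm < p
          obtain ⟨p', hp'v⟩ : ∃ x : Fin n, (x:ℕ) = (p:ℕ) - 1 :=
            ⟨⟨(p:ℕ) - 1, by have := p.isLt; omega⟩, rfl⟩
          have hIH := IH ((p:ℕ) - 1) (by omega) p' (by omega) (by omega)
          have hvlt : (σ p:ℕ) < (σ p':ℕ) := Claim2 p' p (by omega) (by omega)
          have hvp : 1 ≤ (σ p:ℕ) := spos p (by omega)
          have hplt := p.isLt
          rcases hIH with ⟨hL1, hL2⟩ | ⟨hR1, hR2⟩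
          · by_cases hva : a + 2 ≤ (σ p':ℕ)
            · have hd := Ldec p' p (by omega) (by omega) (by omega) (Or.inr hva)
              left
              exact ⟨by omega, by omega⟩
            · have hv' : (σ p':ℕ) = a + 1 := by omega
              have hj := Ljump p' p (by omega) (by omega) hv' (by omega)
              right
              exact ⟨by omega, by omega⟩
          · have hd := Ldec p' p (by omega) (by omega) (by omega) (Or.inl (by omega))
            right
            exact ⟨by omega, by omega⟩
    exact fun p h => C5 (p:ℕ) p rfl h
  -- final assembly
  by_cases hA : a = n - 1
  · -- the decreasing permutation
    have hone : one = pm := huniq one (by omega)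
    have honepm : (1:ℕ) = (pm:ℕ) := by
      have := congrArg Fin.val hone; omega
    refine ⟨n - 1, 0, Or.inr ⟨rfl, rfl⟩, ?_⟩
    funext p
    apply Fin.ext
    have hgc := gfun_class (a := n-1) (b := 0) hn (by omega) (by omega) p
    have hplt := p.isLt
    by_cases hp0 : (p:ℕ) = 0
    · have h2 : p = 0 := Fin.ext (by simpa using hp0)
      have hsp : (σ p : ℕ) = 0 := by rw [h2]; exact hv0
      rcases hgc with ⟨u, v⟩ | ⟨u, _, v⟩ | ⟨u, _, v⟩ | ⟨u, _, v⟩ <;> omega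
    · have h5 := Claim5 p (by omega)
      have hbv : b = n - 1 := by omega
      rcases hgc with ⟨u, v⟩ | ⟨u, u', v⟩ | ⟨u, u', v⟩ | ⟨u, u', v⟩ <;>
        rcases h5 with ⟨w1, w2⟩ | ⟨w1, w2⟩ <;> omega
  · -- the generic case
    have hpm2 : 2 ≤ (pm:ℕ) := by
      rcases eq_or_lt_of_le hpm1 with h1 | h1
      · exfalso
        have hone : one = pm := Fin.ext (by omega)
        have h2 : (σ one : ℕ) = n - 1 := by rw [hone]; exact hpmval
        omega
      · omega
    refine ⟨a, b, Or.inl ⟨by omega, by omega⟩, ?_⟩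
    funext p
    apply Fin.ext
    have hgc := gfun_class (a := a) (b := b) hn hbub (by omega) p
    have hplt := p.isLt
    by_cases hp0 : (p:ℕ) = 0
    · have h2 : p = 0 := Fin.ext (by simpa using hp0)
      have hsp : (σ p : ℕ) = 0 := by rw [h2]; exact hv0
      rcases hgc with ⟨u, v⟩ | ⟨u, _, v⟩ | ⟨u, _, v⟩ | ⟨u, _, v⟩ <;> omega
    · by_cases hpre : (p:ℕ) < (pm:ℕ)
      · have h4 := Claim4 p (by omega) hpre
        rcases hgc with ⟨u, v⟩ | ⟨u, u', v⟩ | ⟨u, u', v⟩ | ⟨u, u', v⟩ <;> omega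
      · have h5 := Claim5 p (by omega)
        rcases hgc with ⟨u, v⟩ | ⟨u, u', v⟩ | ⟨u, u', v⟩ | ⟨u, u', v⟩ <;>
          rcases h5 with ⟨w1, w2⟩ | ⟨w1, w2⟩ <;> omega

end StructureLem
section Count

def idxSet (n : ℕ) : Finset (ℕ × ℕ) :=
  insert (n-1, 0) ((Finset.range (n-1)).biUnion fun a => (Finset.range a).image fun b => (a, b))

lemma mem_pairs {m : ℕ} {x : ℕ × ℕ} :
    x ∈ (Finset.range m).biUnion (fun a => (Finset.range a).image fun b => (a, b)) ↔
      x.1 < m ∧ x.2 < x.1 := by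
  rw [Finset.mem_biUnion]
  constructor
  · rintro ⟨a, ha, hx⟩
    rw [Finset.mem_image] at hx
    obtain ⟨b, hb, rfl⟩ := hx
    exact ⟨Finset.mem_range.mp ha, Finset.mem_range.mp hb⟩
  · rintro ⟨h1, h2⟩
    exact ⟨x.1, Finset.mem_range.mpr h1, Finset.mem_image.mpr ⟨x.2, Finset.mem_range.mpr h2, rfl⟩⟩

lemma mem_idxSet {n : ℕ} {x : ℕ × ℕ} :
    x ∈ idxSet n ↔ (x = (n-1, 0) ∨ (x.2 < x.1 ∧ x.1 < n - 1)) := by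
  rw [idxSet, Finset.mem_insert, mem_pairs]
  tauto

lemma pairs_card (m : ℕ) :
    ((Finset.range m).biUnion (fun a => (Finset.range a).image fun b => (a, b))).card
      = m.choose 2 := by
  rw [Finset.card_biUnion]
  · have h1 : ∀ a ∈ Finset.range m, ((Finset.range a).image fun b => ((a:ℕ), b)).card = a := by
      intro a _
      rw [Finset.card_image_of_injective _ (fun x y h => congrArg Prod.snd h)]
      exact Finset.card_range a
    rw [Finset.sum_congr rfl h1]
    have h2 := Finset.sum_range_id_mul_two m
    rw [Nat.choose_two_right]
    omega
  · intro x hx y hy hxy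
    simp only [Function.onFun]; rw [Finset.disjoint_left]
    intro p hp hq
    rw [Finset.mem_image] at hp hq
    obtain ⟨b, _, rfl⟩ := hp
    obtain ⟨b', _, he⟩ := hq
    exact hxy (congrArg Prod.fst he).symm

lemma idx_card (n : ℕ) (hn : 1 ≤ n) : (idxSet n).card = 1 + (n-1).choose 2 := by
  rw [idxSet, Finset.card_insert_of_notMem, pairs_card]
  · omega
  · intro hmem
    rw [mem_pairs] at hmem
    omega

end Count


theorem card_av_1234_1423 (n : ℕ) (hn : 1 ≤ n) :
    (AvClasses n fun σ => CycAvoids σ ![1,2,3,4] ∧ CycAvoids σ ![1,4,2,3]).ncard = 1 + Nat.choose (n - 1) 2 := by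
  haveI : NeZero n := ⟨by omega⟩
  have hn0 : 0 < n := hn
  set P : (Fin n → Fin n) → Prop :=
    fun σ => CycAvoids σ ![1,2,3,4] ∧ CycAvoids σ ![1,4,2,3] with hP
  set T : Set (Fin n → Fin n) :=
    {s | (∃ σ : Equiv.Perm (Fin n), ⇑σ = s) ∧ s 0 = 0 ∧ P s} with hT
  -- rotation invariance of P
  have hPinv : ∀ (σ : Fin n → Fin n) (r : Fin n), P (rotSeq σ r) ↔ P σ := by
    intro σ r
    rw [hP]
    simp only [CycAvoids, cycContains_rotSeq]
  have hclass_rot : ∀ (σ : Fin n → Fin n) (r : Fin n), CycClass (rotSeq σ r) = CycClass σ := by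
    intro σ r
    ext x
    constructor
    · rintro ⟨u, rfl⟩
      exact ⟨u + r, by rw [← rotSeq_rotSeq]⟩
    · rintro ⟨u, rfl⟩
      exact ⟨u - r, by rw [rotSeq_rotSeq, sub_add_cancel]⟩
  -- Step A
  have hstep : AvClasses n P = CycClass '' T := by
    ext C
    constructor
    · rintro ⟨σ, rfl, hPσ⟩
      refine ⟨rotSeq ⇑σ (σ.symm 0), ⟨⟨(Equiv.addRight (σ.symm 0)).trans σ, rfl⟩, ?_, ?_⟩, ?_⟩
      · show σ (0 + σ.symm 0) = 0
        rw [zero_add, Equiv.apply_symm_apply]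
      · rw [hPinv]; exact hPσ
      · exact hclass_rot _ _
    · rintro ⟨s, ⟨⟨σ, rfl⟩, h0, hPs⟩, rfl⟩
      exact ⟨σ, rfl, hPs⟩
  -- Step B : injectivity of CycClass on T
  have hinjT : Set.InjOn CycClass T := by
    rintro s ⟨⟨σs, rfl⟩, h0s, _⟩ s' ⟨⟨σt, rfl⟩, h0t, _⟩ hC
    have h1 : ⇑σt ∈ CycClass ⇑σs := by rw [hC]; exact ⟨0, rotSeq_zero _⟩
    obtain ⟨r, hr⟩ := h1
    have h00 : σs (0 + r) = σt 0 := congrFun hr 0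
    rw [zero_add, h0t] at h00
    have hr0 : r = 0 := σs.injective (h00.trans h0s.symm)
    rw [← hr, hr0, rotSeq_zero]
  -- Step C : T is the image of the index set
  have hg0 : ∀ (a b : ℕ), gfun n a b hn0 0 = 0 := by
    intro a b
    apply Fin.ext
    rw [gfun_val]
    simp
  have hTeq : T = (fun x : ℕ × ℕ => gfun n x.1 x.2 hn0) '' ↑(idxSet n) := by
    ext s
    constructor
    · rintro ⟨⟨σ, rfl⟩, h0, hPs⟩
      have hBad : ¬ Bad ⇑σ := by
        intro hb
        rcases (key_iff ⇑σ σ.injective h0).mpr hb with h | h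
        · exact hPs.1 h
        · exact hPs.2 h
      by_cases hn2 : 2 ≤ n
      · obtain ⟨a, b, hcond, heq⟩ := structure_lem hn2 σ h0 hBad
        refine ⟨(a, b), ?_, heq.symm⟩
        rw [Finset.mem_coe, mem_idxSet]
        rcases hcond with ⟨h1, h2⟩ | ⟨h1, h2⟩
        · right; exact ⟨h1, by omega⟩
        · left; rw [h1, h2]
      · have hn1 : n = 1 := by omega
        refine ⟨(n-1, 0), by rw [Finset.mem_coe, mem_idxSet]; left; rfl, ?_⟩
        subst hn1
        funext p
        exact Subsingleton.elim _ _
    · rintro ⟨⟨a, b⟩, hmem, rfl⟩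
      rw [Finset.mem_coe, mem_idxSet] at hmem
      have hcond : b ≤ a ∧ a ≤ n - 1 := by
        rcases hmem with h | ⟨h1, h2⟩
        · have h1 : a = n - 1 := congrArg Prod.fst h
          have h2 : b = 0 := congrArg Prod.snd h
          omega
        · omega
      have hinjg := gfun_inj hn0 hcond.1 hcond.2
      have hbij : Function.Bijective (gfun n a b hn0) := Finite.injective_iff_bijective.mp hinjg
      have hgood := gfun_good hn0 hcond.1 hcond.2
      refine ⟨⟨Equiv.ofBijective _ hbij, rfl⟩, hg0 a b, ?_, ?_⟩
      · intro hc
        exact hgood ((key_iff _ hinjg (hg0 a b)).mp (Or.inl hc))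
      · intro hc
        exact hgood ((key_iff _ hinjg (hg0 a b)).mp (Or.inr hc))
  -- Step D : injectivity of gfun on the index set
  have hinjg2 : Set.InjOn (fun x : ℕ × ℕ => gfun n x.1 x.2 hn0) ↑(idxSet n) := by
    have hkey : ∀ a b b' : ℕ, b' < b → b < a → a ≤ n - 2 →
        gfun n a b hn0 ≠ gfun n a b' hn0 := by
      intro a b b' hbb hba han heq
      have hp0lt : a - b + 1 < n := by omega
      have hval := congrFun heq (⟨a - b + 1, hp0lt⟩ : Fin n)
      have hv := congrArg Fin.val hval
      rw [gfun_val, gfun_val] at hv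
      rw [if_neg (by first | (simp; omega) | simp | omega), if_neg (by first | (simp; omega) | simp | omega), if_pos (by first | (simp; omega) | simp | omega),
        if_neg (by first | (simp; omega) | simp | omega), if_pos (by first | (simp; omega) | simp | omega)] at hv
      simp only [mod_low (show n + a - b - (a - b + 1) < n by omega),
        mod_low (show a + 1 - (a - b + 1) < n by omega)] at hv
      omega
    rintro ⟨a, b⟩ hab ⟨a', b'⟩ hab' heq
    simp only [Finset.mem_coe, mem_idxSet] at hab hab'
    by_cases hn2 : 2 ≤ n
    · -- first coordinates agree : evaluate at position 1
      have hmem1 : b ≤ a ∧ a ≤ n - 1 ∧ 1 ≤ a - b := by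
        rcases hab with h | ⟨h1, h2⟩
        · have e1 : a = n - 1 := congrArg Prod.fst h
          have e2 : b = 0 := congrArg Prod.snd h
          omega
        · omega
      have hmem2 : b' ≤ a' ∧ a' ≤ n - 1 ∧ 1 ≤ a' - b' := by
        rcases hab' with h | ⟨h1, h2⟩
        · have e1 : a' = n - 1 := congrArg Prod.fst h
          have e2 : b' = 0 := congrArg Prod.snd h
          omega
        · omega
      have h1lt : 1 < n := by omega
      have hval := congrArg Fin.val (congrFun heq (⟨1, h1lt⟩ : Fin n))
      rw [gfun_val, gfun_val] at hval
      rw [if_neg (by simp), if_pos (by first | (simp; omega) | simp | omega), if_neg (by simp),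
        if_pos (by first | (simp; omega) | simp | omega)] at hval
      simp only [mod_low (show a + 1 - 1 < n by omega),
        mod_low (show a' + 1 - 1 < n by omega)] at hval
      have haa : a = a' := by omega
      subst haa
      by_cases hA : a = n - 1
      · have e1 : b = 0 := by
          rcases hab with h | ⟨h1, h2⟩
          · exact congrArg Prod.snd h
          · omega
        have e2 : b' = 0 := by
          rcases hab' with h | ⟨h1, h2⟩
          · exact congrArg Prod.snd h
          · omega
        rw [Prod.mk.injEq]
        exact ⟨rfl, e1.trans e2.symm⟩
      · have hc1 : b < a ∧ a ≤ n - 2 := by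
          rcases hab with h | ⟨h1, h2⟩
          · exact absurd (congrArg Prod.fst h) hA
          · omega
        have hc2 : b' < a ∧ a ≤ n - 2 := by
          rcases hab' with h | ⟨h1, h2⟩
          · exact absurd (congrArg Prod.fst h) hA
          · omega
        rcases lt_trichotomy b b' with hd | hd | hd
        · exact absurd heq.symm (hkey a b' b hd hc2.1 hc2.2)
        · rw [hd]
        · exact absurd heq (hkey a b b' hd hc1.1 hc1.2)
    · -- n = 1 : index set is a singleton
      have hn1 : n = 1 := by omega
      have e1 : (a, b) = (n-1, 0) := by
        rcases hab with h | ⟨h1, h2⟩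
        · exact h
        · omega
      have e2 : (a', b') = (n-1, 0) := by
        rcases hab' with h | ⟨h1, h2⟩
        · exact h
        · omega
      rw [e1, e2]
  rw [hstep, Set.ncard_image_of_injOn hinjT, hTeq, Set.ncard_image_of_injOn hinjg2,
    Set.ncard_coe_finset, idx_card n hn]
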